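/- Let L be the first-order language with a single binary function symbol f, let 𝒜 be an orderly L-algebra, and let ♯𝒜 be the orderly L-algebra defined by ♯𝒜(t) = (𝒜(tˣ), 𝒜(tʸ)), where (vᵢˣ, vᵢʸ) = (v_{2i}, v_{2i+1}) and ((f s t)ˣ, (f s t)ʸ) = (f sˣ sʸ, f tˣ tʸ) for orderly terms s < t. If 𝒜 is Ramsey, then ♯𝒜 is Ramsey. -/

import Mathlib

open Function Set

universe u v w

/-- Terms of a purely functional first-order language whose function symbols
of arity `n` form the type `F n`, with variables indexed by `ℕ`. -/
inductive Tm (F : ℕ → Type u) : Type u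
  | var : ℕ → Tm F
  | func : {n : ℕ} → F n → (Fin n → Tm F) → Tm F

namespace Tm

variable {F : ℕ → Type u} {A : Type v} {β : Type w}

/-- The list of (indices of) variables occurring in a term, from left to right. -/
def varList : Tm F → List ℕ
  | .var i => [i]
  | .func (n := n) _ ts => (List.finRange n).flatMap fun i => (ts i).varList

/-- A term is *orderly* if the indices of the variables occurring in it,
read from left to right, are strictly increasing. -/
def Orderly (t : Tm F) : Prop := t.varList.Chain' (· < ·)

/-- `TermLT s t` iff the index of the last variable of `s` is less than the
index of the first variable of `t`. -/
def TermLT (s t : Tm F) : Prop :=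
  ∃ i j, s.varList.getLast? = some i ∧ t.varList.head? = some j ∧ i < j

/-- An infinite sequence of orderly terms is *admissible* iff it is increasing
with respect to `TermLT`. -/
def Admissible (ts : ℕ → Tm F) : Prop :=
  (∀ i, (ts i).Orderly) ∧ ∀ i, TermLT (ts i) (ts (i + 1))

/-- `s.subst σ` replaces each variable `vᵢ` in `s` by `σ i`. -/
def subst (σ : ℕ → Tm F) : Tm F → Tm F
  | .var i => σ i
  | .func f ts => .func f fun i => (ts i).subst σ

/-- Interpretation of a term in a structure with underlying set `A` whose
interpretation of the function symbols is `I`, under the assignment `a`. -/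
def realize (I : ∀ n, F n → (Fin n → A) → A) (a : ℕ → A) : Tm F → A
  | .var i => a i
  | .func (n := n) f ts => I n f fun i => (ts i).realize I a

end Tm

section General

variable {F : ℕ → Type u} {A : Type v} {β : Type w}

/-- `b` is a reduction of `a` (with respect to the algebra `(A, I)`). -/
def SeqReduction (I : ∀ n, F n → (Fin n → A) → A) (b a : ℕ → A) : Prop :=
  ∃ ts : ℕ → Tm F, Tm.Admissible ts ∧ ∀ i, b i = (ts i).realize I a

/-- The set of finite reductions of `a`. -/
def FR (I : ∀ n, F n → (Fin n → A) → A) (a : ℕ → A) : Set A :=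
  { x | ∃ t : Tm F, t.Orderly ∧ x = t.realize I a }

/-- `(A, I)` is a Ramsey algebra. -/
def RamseyAlg (I : ∀ n, F n → (Fin n → A) → A) : Prop :=
  ∀ (a : ℕ → A) (X : Set A),
    ∃ b, SeqReduction I b a ∧ (FR I b ⊆ X ∨ FR I b ∩ X = ∅)

/-- `(A, I)` is Ramsey below `a`. -/
def RamseyBelow (I : ∀ n, F n → (Fin n → A) → A) (a : ℕ → A) : Prop :=
  ∀ b, SeqReduction I b a → ∀ X : Set A,
    ∃ c, SeqReduction I c b ∧ (FR I c ⊆ X ∨ FR I c ∩ X = ∅)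

/-- An increasing tuple `t₁ < t₂ < ⋯ < tₙ` of orderly terms. -/
def OrdTuple {n : ℕ} (t : Fin n → Tm F) : Prop :=
  (∀ i, (t i).Orderly) ∧ ∀ i j : Fin n, i < j → Tm.TermLT (t i) (t j)

/-- `𝒜` (as a function on orderly terms) is an orderly algebra. -/
def IsOrderlyAlg (𝒜 : Tm F → β) : Prop :=
  ∀ (n : ℕ) (f : F n) (t t' : Fin n → Tm F), OrdTuple t → OrdTuple t' →
    (∀ k, 𝒜 (t k) = 𝒜 (t' k)) → 𝒜 (.func f t) = 𝒜 (.func f t')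

/-- The universe of an orderly algebra: its range on orderly terms. -/
def OAUniv (𝒜 : Tm F → β) : Set β := 𝒜 '' { t | t.Orderly }

/-- `ℬ` is a reduction of the orderly algebra `𝒜` (as functions on orderly terms). -/
def OAReduction (ℬ 𝒜 : Tm F → β) : Prop :=
  ∃ ts : ℕ → Tm F, Tm.Admissible ts ∧ ∀ s : Tm F, s.Orderly → ℬ s = 𝒜 (s.subst ts)

/-- `ℬ` is homogeneous for `X`. -/
def Homog (ℬ : Tm F → β) (X : Set β) : Prop :=
  OAUniv ℬ ⊆ X ∨ OAUniv ℬ ∩ X = ∅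

/-- An orderly algebra is weakly Ramsey. -/
def WeaklyRamseyOA (𝒜 : Tm F → β) : Prop :=
  ∀ X ⊆ OAUniv 𝒜, ∃ ℬ, OAReduction ℬ 𝒜 ∧ Homog ℬ X

/-- An orderly algebra is Ramsey. -/
def RamseyOA (𝒜 : Tm F → β) : Prop :=
  ∀ ℬ, OAReduction ℬ 𝒜 → ∀ X ⊆ OAUniv 𝒜, ∃ 𝒞, OAReduction 𝒞 ℬ ∧ Homog 𝒞 X

/-- The orderly algebra induced from the algebra `(A, I)` by the sequence `a`. -/
def inducedOA (I : ∀ n, F n → (Fin n → A) → A) (a : ℕ → A) : Tm F → A :=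
  fun t => t.realize I a

/-- `[FR(c)]ⁿ_<` : increasing `n`-tuples of finite reductions of `c`. -/
def FRtuple (I : ∀ n, F n → (Fin n → A) → A) (n : ℕ) (c : ℕ → A) : Set (Fin n → A) :=
  { x | ∃ t : Fin n → Tm F, OrdTuple t ∧ ∀ i, x i = (t i).realize I c }

/-- `‖𝒞‖ⁿ_<` for an orderly algebra `𝒞`. -/
def OATuple (n : ℕ) (𝒞 : Tm F → β) : Set (Fin n → β) :=
  { x | ∃ t : Fin n → Tm F, OrdTuple t ∧ ∀ i, x i = 𝒞 (t i) }

/-- The basic set `[n, a]` of the preorder with approximations `(ᵂA, ≤)`. -/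
def Approx (I : ∀ n, F n → (Fin n → A) → A) (n : ℕ) (a : ℕ → A) : Set (ℕ → A) :=
  { b | SeqReduction I b a ∧ ∀ i < n, b i = a i }

/-- The natural topology on `ᵂA`, generated by the sets `[n, a]`. -/
def natTop (I : ∀ n, F n → (Fin n → A) → A) : TopologicalSpace (ℕ → A) :=
  TopologicalSpace.generateFrom { S | ∃ n a, S = Approx I n a }

/-- A subset `X ⊆ ᵂA` is Ramsey. -/
def RamseySet (I : ∀ n, F n → (Fin n → A) → A) (X : Set (ℕ → A)) : Prop :=
  ∀ (n : ℕ) (a : ℕ → A), ∃ b ∈ Approx I n a,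
    Approx I n b ⊆ X ∨ Approx I n b ∩ X = ∅

/-- `X` has the property of Baire in the natural topology:
its symmetric difference with some open set is meager. -/
def HasBaireProperty (I : ∀ n, F n → (Fin n → A) → A) (X : Set (ℕ → A)) : Prop :=
  ∃ U : Set (ℕ → A), @IsOpen _ (natTop I) U ∧ @IsMeagre _ (natTop I) (symmDiff X U)

end General

/-- The language with a single binary function symbol. -/
inductive BinF : ℕ → Type
  | f : BinF 2

/-- Application of the binary function symbol: the term `f s t`. -/
def fapp (s t : Tm BinF) : Tm BinF := .func BinF.f ![s, t]

/-- The interpretation of the single binary function symbol by a binary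
operation `g` on `A`. -/
def binI {A : Type v} (g : A → A → A) : ∀ n, BinF n → (Fin n → A) → A
  | _, BinF.f, args => g (args 0) (args 1)

/-- The pair `(tˣ, tʸ)`: `(vᵢˣ, vᵢʸ) = (v_{2i}, v_{2i+1})` and
`((f s t)ˣ, (f s t)ʸ) = (f sˣ sʸ, f tˣ tʸ)`. -/
def xyPair : Tm BinF → Tm BinF × Tm BinF
  | .var i => (.var (2 * i), .var (2 * i + 1))
  | .func BinF.f ts =>
      (fapp (xyPair (ts 0)).1 (xyPair (ts 0)).2, fapp (xyPair (ts 1)).1 (xyPair (ts 1)).2)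

/-- The orderly algebra `♯𝒜`, `♯𝒜(t) = (𝒜(tˣ), 𝒜(tʸ))`. -/
def sharpOA {β : Type w} (𝒜 : Tm BinF → β) : Tm BinF → β × β :=
  fun t => (𝒜 (xyPair t).1, 𝒜 (xyPair t).2)
section Infra

open Tm List

namespace Tm

variable {β : Type w}

lemma varList_func (ts : Fin 2 → Tm BinF) :
    (Tm.func BinF.f ts).varList = (ts 0).varList ++ (ts 1).varList := by
  show (List.finRange 2).flatMap _ = _
  simp [List.finRange_succ, List.finRange_zero]

lemma varList_fapp (s t : Tm BinF) :
    (fapp s t).varList = s.varList ++ t.varList := by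
  show (Tm.func BinF.f ![s, t]).varList = _
  rw [varList_func]; simp

lemma varList_ne_nil : ∀ t : Tm BinF, t.varList ≠ []
  | .var i => by simp [varList]
  | .func BinF.f ts => by
      rw [varList_func]
      have := varList_ne_nil (ts 0)
      simp [this]

/-- First variable of a term. -/
def fv (t : Tm BinF) : ℕ := t.varList.headI

/-- Last variable of a term. -/
def lv (t : Tm BinF) : ℕ := t.varList.getLastI

lemma head?_varList (t : Tm BinF) : t.varList.head? = some t.fv := by
  cases h : t.varList with
  | nil => exact absurd h (varList_ne_nil t)
  | cons a l => simp [fv, h]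

lemma getLast?_varList (t : Tm BinF) : t.varList.getLast? = some t.lv := by
  cases h : t.varList.getLast? with
  | none => exact absurd (List.getLast?_eq_none_iff.1 h) (varList_ne_nil t)
  | some a => rw [lv, List.getLastI_eq_getLast?, h]; rfl

lemma termLT_iff {s t : Tm BinF} : TermLT s t ↔ s.lv < t.fv := by
  constructor
  · rintro ⟨i, j, hi, hj, hij⟩
    rw [getLast?_varList] at hi; rw [head?_varList] at hj
    cases hi; cases hj; omega
  · intro h
    exact ⟨s.lv, t.fv, getLast?_varList s, head?_varList t, h⟩

lemma fv_fapp (s t : Tm BinF) : (fapp s t).fv = s.fv := by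
  simp only [fv, varList_fapp]
  cases h : s.varList with
  | nil => exact absurd h (varList_ne_nil s)
  | cons a l => simp

lemma lv_fapp (s t : Tm BinF) : (fapp s t).lv = t.lv := by
  simp only [lv, varList_fapp, List.getLastI_eq_getLast?, List.getLast?_append]
  cases h : t.varList.getLast? with
  | none => exact absurd (List.getLast?_eq_none_iff.1 h) (varList_ne_nil t)
  | some a => rfl

lemma fv_var (i : ℕ) : (Tm.var i : Tm BinF).fv = i := rfl
lemma lv_var (i : ℕ) : (Tm.var i : Tm BinF).lv = i := rfl

lemma orderly_var (i : ℕ) : (Tm.var i : Tm BinF).Orderly := by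
  simp [Orderly, varList, List.Chain', List.isChain_singleton]

lemma orderly_fapp {s t : Tm BinF} :
    (fapp s t).Orderly ↔ s.Orderly ∧ t.Orderly ∧ s.lv < t.fv := by
  simp only [Orderly, List.Chain', varList_fapp, List.isChain_append]
  constructor
  · rintro ⟨h1, h2, h3⟩
    exact ⟨h1, h2, h3 _ (by rw [getLast?_varList]; rfl) _ (by rw [head?_varList]; rfl)⟩
  · rintro ⟨h1, h2, h3⟩
    refine ⟨h1, h2, fun x hx y hy => ?_⟩
    rw [getLast?_varList] at hx; rw [head?_varList] at hy
    cases hx; cases hy; exact h3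

lemma orderly_func {ts : Fin 2 → Tm BinF} :
    (Tm.func BinF.f ts).Orderly ↔ (ts 0).Orderly ∧ (ts 1).Orderly ∧ (ts 0).lv < (ts 1).fv := by
  have : Tm.func BinF.f ts = fapp (ts 0) (ts 1) := by
    show _ = Tm.func BinF.f ![ts 0, ts 1]
    congr 1; funext i; fin_cases i <;> rfl
  rw [this, orderly_fapp]

lemma func_eq_fapp (ts : Fin 2 → Tm BinF) : Tm.func BinF.f ts = fapp (ts 0) (ts 1) := by
  show _ = Tm.func BinF.f ![ts 0, ts 1]
  congr 1; funext i; fin_cases i <;> rfl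

end Tm

end Infra
section Infra2

namespace Tm

lemma subst_var (σ : ℕ → Tm BinF) (i : ℕ) : (Tm.var i).subst σ = σ i := rfl

lemma subst_fapp (σ : ℕ → Tm BinF) (s t : Tm BinF) :
    (fapp s t).subst σ = fapp (s.subst σ) (t.subst σ) := by
  show Tm.func BinF.f _ = _
  rw [func_eq_fapp]; rfl

lemma subst_id : ∀ t : Tm BinF, t.subst (fun i => Tm.var i) = t
  | .var i => rfl
  | .func BinF.f ts => by
      rw [func_eq_fapp, subst_fapp, subst_id (ts 0), subst_id (ts 1)]

lemma subst_subst (σ τ : ℕ → Tm BinF) :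
    ∀ t : Tm BinF, (t.subst σ).subst τ = t.subst (fun i => (σ i).subst τ)
  | .var i => rfl
  | .func BinF.f ts => by
      rw [func_eq_fapp, subst_fapp, subst_fapp, subst_fapp,
        subst_subst σ τ (ts 0), subst_subst σ τ (ts 1)]

lemma subst_congr {σ τ : ℕ → Tm BinF} :
    ∀ {t : Tm BinF}, (∀ i ∈ t.varList, σ i = τ i) → t.subst σ = t.subst τ
  | .var i, h => h i (by simp [varList])
  | .func BinF.f ts, h => by
      rw [func_eq_fapp, subst_fapp, subst_fapp]
      rw [func_eq_fapp, varList_fapp] at h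
      rw [subst_congr (fun i hi => h i (by simp [hi])),
        subst_congr (fun i hi => h i (by simp [hi]))]

lemma varList_subst (σ : ℕ → Tm BinF) :
    ∀ t : Tm BinF, (t.subst σ).varList = t.varList.flatMap (fun i => (σ i).varList)
  | .var i => by simp [varList, subst_var]
  | .func BinF.f ts => by
      rw [func_eq_fapp, subst_fapp, varList_fapp, varList_fapp, List.flatMap_append,
        varList_subst σ (ts 0), varList_subst σ (ts 1)]

lemma mem_varList_subst {σ : ℕ → Tm BinF} {t : Tm BinF} {v : ℕ} :
    v ∈ (t.subst σ).varList ↔ ∃ i ∈ t.varList, v ∈ (σ i).varList := by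
  rw [varList_subst]; simp

lemma fv_subst (σ : ℕ → Tm BinF) : ∀ t : Tm BinF, (t.subst σ).fv = (σ t.fv).fv
  | .var i => rfl
  | .func BinF.f ts => by
      rw [func_eq_fapp, subst_fapp, fv_fapp, fv_fapp, fv_subst σ (ts 0)]

lemma lv_subst (σ : ℕ → Tm BinF) : ∀ t : Tm BinF, (t.subst σ).lv = (σ t.lv).lv
  | .var i => rfl
  | .func BinF.f ts => by
      rw [func_eq_fapp, subst_fapp, lv_fapp, lv_fapp, lv_subst σ (ts 1)]

lemma fv_mem_varList (t : Tm BinF) : t.fv ∈ t.varList := by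
  cases h : t.varList with
  | nil => exact absurd h (varList_ne_nil t)
  | cons a l => simp [fv, h]

lemma lv_mem_varList (t : Tm BinF) : t.lv ∈ t.varList := by
  have := getLast?_varList t
  have h2 := List.mem_of_mem_getLast? (l := t.varList) (a := t.lv)
  exact h2 (by rw [this]; rfl)

lemma Orderly.fv_le {t : Tm BinF} (h : t.Orderly) {v : ℕ} (hv : v ∈ t.varList) :
    t.fv ≤ v := by
  simp only [Orderly, List.Chain'] at h; rw [List.isChain_iff_pairwise] at h
  cases hl : t.varList with
  | nil => exact absurd hl (varList_ne_nil t)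
  | cons a l =>
    rw [hl] at hv h
    rcases List.mem_cons.1 hv with rfl | hv
    · simp [fv, hl]
    · have := (List.pairwise_cons.1 h).1 v hv
      simp only [fv, hl, List.headI]
      omega

lemma pairwise_le_getLast? : ∀ (l : List ℕ), l.Pairwise (· < ·) → ∀ v ∈ l, ∀ a, l.getLast? = some a → v ≤ a
  | [], _, v, hv => by simp at hv
  | [x], _, v, hv => by intro a ha; simp_all
  | x :: y :: l, h, v, hv => by
    intro a ha
    rw [List.getLast?_cons_cons] at ha
    have hpc := List.pairwise_cons.1 h
    rcases List.mem_cons.1 hv with rfl | hv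
    · have hmem : a ∈ y :: l := List.mem_of_mem_getLast? (by rw [ha]; rfl)
      exact le_of_lt (hpc.1 a hmem)
    · exact pairwise_le_getLast? (y :: l) hpc.2 v hv a ha

lemma Orderly.le_lv {t : Tm BinF} (h : t.Orderly) {v : ℕ} (hv : v ∈ t.varList) :
    v ≤ t.lv := by
  simp only [Orderly, List.Chain'] at h; rw [List.isChain_iff_pairwise] at h
  exact pairwise_le_getLast? _ h v hv _ (getLast?_varList t)

end Tm

end Infra2
section Infra3

namespace Tm

/-- All variables of `t` are `≥ n`. -/
def VarsGe (n : ℕ) (t : Tm BinF) : Prop := ∀ v ∈ t.varList, n ≤ v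

/-- All variables of `t` are `< n`. -/
def VarsLt (n : ℕ) (t : Tm BinF) : Prop := ∀ v ∈ t.varList, v < n

/-- A fully increasing admissible sequence. -/
def StrongAdm (σ : ℕ → Tm BinF) : Prop :=
  (∀ i, (σ i).Orderly) ∧ ∀ i j, i < j → TermLT (σ i) (σ j)

lemma Orderly.fv_le_lv {t : Tm BinF} (h : t.Orderly) : t.fv ≤ t.lv :=
  h.fv_le (lv_mem_varList t)

lemma termLT_trans' {a b c : Tm BinF} (h1 : TermLT a b) (hb : b.Orderly)
    (h2 : TermLT b c) : TermLT a c := by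
  rw [termLT_iff] at *
  have := hb.fv_le_lv
  omega

lemma Admissible.strongAdm {σ : ℕ → Tm BinF} (h : Admissible σ) : StrongAdm σ := by
  refine ⟨h.1, fun i j hij => ?_⟩
  obtain ⟨k, rfl⟩ : ∃ k, j = i + k + 1 := ⟨j - i - 1, by omega⟩
  clear hij
  induction k with
  | zero => exact h.2 i
  | succ k ih => exact termLT_trans' ih (h.1 _) (h.2 (i + k + 1))

lemma StrongAdm.admissible {σ : ℕ → Tm BinF} (h : StrongAdm σ) : Admissible σ :=
  ⟨h.1, fun i => h.2 i (i + 1) (by omega)⟩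

lemma orderly_subst' {σ : ℕ → Tm BinF} :
    ∀ {t : Tm BinF}, t.Orderly → (∀ i ∈ t.varList, (σ i).Orderly) →
      (∀ i j, i ∈ t.varList → j ∈ t.varList → i < j → TermLT (σ i) (σ j)) →
      (t.subst σ).Orderly
  | .var i, _, h1, _ => h1 i (by simp [varList])
  | .func BinF.f ts, ht, h1, h2 => by
    rw [func_eq_fapp] at ht ⊢
    rw [func_eq_fapp, varList_fapp] at h1 h2
    rw [orderly_fapp] at ht
    rw [subst_fapp, orderly_fapp]
    obtain ⟨ho0, ho1, hlt⟩ := ht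
    have m0 : ∀ i ∈ (ts 0).varList, i ∈ (ts 0).varList ++ (ts 1).varList := by intro i hi; simp [hi]
    have m1 : ∀ i ∈ (ts 1).varList, i ∈ (ts 0).varList ++ (ts 1).varList := by intro i hi; simp [hi]
    refine ⟨orderly_subst' ho0 (fun i hi => h1 i (m0 i hi))
        (fun i j hi hj => h2 i j (m0 i hi) (m0 j hj)),
      orderly_subst' ho1 (fun i hi => h1 i (m1 i hi))
        (fun i j hi hj => h2 i j (m1 i hi) (m1 j hj)), ?_⟩
    rw [lv_subst, fv_subst]
    have hlv0 := lv_mem_varList (ts 0)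
    have hfv1 := fv_mem_varList (ts 1)
    have := h2 _ _ (m0 _ hlv0) (m1 _ hfv1) hlt
    exact termLT_iff.1 this

lemma StrongAdm.orderly_subst {σ : ℕ → Tm BinF} (hσ : StrongAdm σ) {t : Tm BinF}
    (ht : t.Orderly) : (t.subst σ).Orderly :=
  orderly_subst' ht (fun i _ => hσ.1 i) (fun i j _ _ h => hσ.2 i j h)

lemma termLT_subst' {σ : ℕ → Tm BinF} {s t : Tm BinF} (h : TermLT s t)
    (h2 : TermLT (σ s.lv) (σ t.fv)) : TermLT (s.subst σ) (t.subst σ) := by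
  rw [termLT_iff, lv_subst, fv_subst]
  exact termLT_iff.1 h2

lemma StrongAdm.termLT_subst {σ : ℕ → Tm BinF} (hσ : StrongAdm σ) {s t : Tm BinF}
    (h : TermLT s t) : TermLT (s.subst σ) (t.subst σ) :=
  termLT_subst' h (hσ.2 _ _ (termLT_iff.1 h))

lemma StrongAdm.comp {σ τ : ℕ → Tm BinF} (hσ : StrongAdm σ) (hτ : StrongAdm τ) :
    StrongAdm (fun i => (σ i).subst τ) :=
  ⟨fun i => hτ.orderly_subst (hσ.1 i), fun i j hij => hτ.termLT_subst (hσ.2 i j hij)⟩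

lemma strongAdm_var : StrongAdm (fun i => (Tm.var i : Tm BinF)) :=
  ⟨fun i => orderly_var i, fun i j hij => termLT_iff.2 (by simpa [lv_var, fv_var])⟩

lemma strongAdm_shift (N : ℕ) : StrongAdm (fun i => (Tm.var (N + i) : Tm BinF)) :=
  ⟨fun i => orderly_var _, fun i j hij => termLT_iff.2 (by simp [lv_var, fv_var]; omega)⟩

lemma StrongAdm.tail {σ : ℕ → Tm BinF} (hσ : StrongAdm σ) (N : ℕ) :
    StrongAdm (fun i => σ (N + i)) :=
  ⟨fun i => hσ.1 _, fun i j hij => hσ.2 _ _ (by omega)⟩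

lemma varsGe_subst {n : ℕ} {σ : ℕ → Tm BinF} {t : Tm BinF}
    (h : ∀ j ∈ t.varList, VarsGe n (σ j)) : VarsGe n (t.subst σ) := by
  intro v hv
  obtain ⟨i, hi, hvi⟩ := mem_varList_subst.1 hv
  exact h i hi v hvi

lemma Orderly.varsGe_of_termLT {s t : Tm BinF} (ht : t.Orderly) (h : TermLT s t) :
    VarsGe (s.lv + 1) t := fun v hv => by
  have := ht.fv_le hv
  have := termLT_iff.1 h
  omega

lemma varsGe_var {n i : ℕ} (h : n ≤ i) : VarsGe n (Tm.var i : Tm BinF) := by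
  intro v hv; simp [varList] at hv; omega

end Tm

end Infra3
section Infra4

namespace Tm

lemma xyPair_var (i : ℕ) :
    xyPair (Tm.var i) = (Tm.var (2 * i), Tm.var (2 * i + 1)) := rfl

lemma xyPair_fapp (s t : Tm BinF) :
    xyPair (fapp s t) =
      (fapp (xyPair s).1 (xyPair s).2, fapp (xyPair t).1 (xyPair t).2) := by
  show xyPair (Tm.func BinF.f ![s, t]) = _
  rw [xyPair]; simp

/-- Core structural facts about `xyPair` on orderly terms. -/
lemma xyPair_facts : ∀ {t : Tm BinF}, t.Orderly →
    ((xyPair t).1.Orderly ∧ (xyPair t).2.Orderly ∧ (xyPair t).1.lv < (xyPair t).2.fv) ∧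
    (xyPair t).1.fv = 2 * t.fv ∧ (xyPair t).2.lv = 2 * t.lv + 1
  | .var i, _ => by
    rw [xyPair_var]
    exact ⟨⟨orderly_var _, orderly_var _, by simp [lv_var, fv_var]⟩, rfl, rfl⟩
  | .func BinF.f ts, ht => by
    rw [func_eq_fapp] at ht ⊢
    rw [orderly_fapp] at ht
    obtain ⟨h0, h1, hlt⟩ := ht
    obtain ⟨⟨a0, b0, c0⟩, d0, e0⟩ := xyPair_facts h0
    obtain ⟨⟨a1, b1, c1⟩, d1, e1⟩ := xyPair_facts h1
    rw [xyPair_fapp]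
    simp only [fv_fapp, lv_fapp]
    refine ⟨⟨orderly_fapp.2 ⟨a0, b0, c0⟩, orderly_fapp.2 ⟨a1, b1, c1⟩, ?_⟩, d0, e1⟩
    omega

lemma Orderly.xy1 {t : Tm BinF} (h : t.Orderly) : (xyPair t).1.Orderly :=
  (xyPair_facts h).1.1
lemma Orderly.xy2 {t : Tm BinF} (h : t.Orderly) : (xyPair t).2.Orderly :=
  (xyPair_facts h).1.2.1
lemma Orderly.xyLT {t : Tm BinF} (h : t.Orderly) : TermLT (xyPair t).1 (xyPair t).2 :=
  termLT_iff.2 (xyPair_facts h).1.2.2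

/-- The doubling sequence `pSeq i = f v₂ᵢ v₂ᵢ₊₁`. -/
def pSeq : ℕ → Tm BinF := fun i => fapp (Tm.var (2 * i)) (Tm.var (2 * i + 1))

lemma strongAdm_pSeq : StrongAdm pSeq := by
  refine ⟨fun i => orderly_fapp.2 ⟨orderly_var _, orderly_var _, by simp [lv_var, fv_var]⟩,
    fun i j hij => termLT_iff.2 ?_⟩
  simp only [pSeq, lv_fapp, fv_fapp, lv_var, fv_var]
  omega

/-- `t[pSeq] = f tˣ tʸ`. -/
lemma subst_pSeq : ∀ t : Tm BinF, t.subst pSeq = fapp (xyPair t).1 (xyPair t).2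
  | .var i => rfl
  | .func BinF.f ts => by
    rw [func_eq_fapp, subst_fapp, xyPair_fapp, subst_pSeq (ts 0), subst_pSeq (ts 1)]

/-- Interleaving of the `x`- and `y`-parts of a sequence. -/
def interleaveXY (ts : ℕ → Tm BinF) : ℕ → Tm BinF := fun j =>
  if j % 2 = 0 then (xyPair (ts (j / 2))).1 else (xyPair (ts (j / 2))).2

lemma interleaveXY_even (ts : ℕ → Tm BinF) (i : ℕ) :
    interleaveXY ts (2 * i) = (xyPair (ts i)).1 := by
  simp [interleaveXY, Nat.mul_div_cancel_left]

lemma interleaveXY_odd (ts : ℕ → Tm BinF) (i : ℕ) :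
    interleaveXY ts (2 * i + 1) = (xyPair (ts i)).2 := by
  have h1 : (2 * i + 1) % 2 = 1 := by omega
  have h2 : (2 * i + 1) / 2 = i := by omega
  simp [interleaveXY, h1, h2]

lemma strongAdm_interleaveXY {ts : ℕ → Tm BinF} (h : StrongAdm ts) :
    StrongAdm (interleaveXY ts) := by
  have key : ∀ j, (interleaveXY ts j).Orderly ∧ TermLT (interleaveXY ts j) (interleaveXY ts (j + 1)) := by
    intro j
    rcases Nat.even_or_odd j with ⟨i, hi⟩ | ⟨i, hi⟩
    · subst hi
      rw [show i + i = 2 * i by ring, show 2 * i + 1 = 2 * i + 1 from rfl,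
        interleaveXY_even, interleaveXY_odd]
      exact ⟨(h.1 i).xy1, (h.1 i).xyLT⟩
    · subst hi
      rw [show 2 * i + 1 + 1 = 2 * (i + 1) by ring, interleaveXY_odd, interleaveXY_even]
      refine ⟨(h.1 i).xy2, termLT_iff.2 ?_⟩
      have e1 := (xyPair_facts (h.1 i)).2.2
      have e2 := (xyPair_facts (h.1 (i + 1))).2.1
      have := termLT_iff.1 (h.2 i (i + 1) (by omega))
      omega
  exact (Admissible.strongAdm ⟨fun j => (key j).1, fun j => (key j).2⟩)

/-- `(s[t⃗])ˣ = sˣ[interleave]` and `(s[t⃗])ʸ = sʸ[interleave]`. -/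
lemma xyPair_subst (ts : ℕ → Tm BinF) :
    ∀ s : Tm BinF, xyPair (s.subst ts) =
      ((xyPair s).1.subst (interleaveXY ts), (xyPair s).2.subst (interleaveXY ts))
  | .var i => by
    rw [subst_var, xyPair_var]
    simp [subst_var, interleaveXY_even, interleaveXY_odd]
  | .func BinF.f ts' => by
    rw [func_eq_fapp, subst_fapp, xyPair_fapp, xyPair_fapp, subst_fapp, subst_fapp,
      xyPair_subst ts (ts' 0), xyPair_subst ts (ts' 1)]

end Tm

end Infra4
section Infra5

namespace Tm

/-- Height of a term. -/
def ht : Tm BinF → ℕ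
  | .var _ => 0
  | .func BinF.f ts => max (ht (ts 0)) (ht (ts 1)) + 1

/-- All terms of height `< k+1` with variables `< n` (overapproximation). -/
def gen (n : ℕ) : ℕ → List (Tm BinF)
  | 0 => (List.range n).map Tm.var
  | k + 1 => gen n k ++ (gen n k).flatMap fun s => (gen n k).map (fapp s)

lemma gen_mono {n : ℕ} : ∀ {k k' : ℕ}, k ≤ k' → ∀ {t}, t ∈ gen n k → t ∈ gen n k' := by
  intro k k' hkk' t h
  obtain ⟨m, rfl⟩ : ∃ m, k' = k + m := ⟨k' - k, by omega⟩
  clear hkk'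
  induction m with
  | zero => exact h
  | succ m ih =>
    have e : gen n (k + (m + 1)) =
        gen n (k + m) ++ ((gen n (k + m)).flatMap fun s => (gen n (k + m)).map (fapp s)) := rfl
    rw [e]
    exact List.mem_append.2 (Or.inl ih)

lemma mem_gen : ∀ {t : Tm BinF}, VarsLt n t → ∀ {k}, ht t ≤ k → t ∈ gen n k
  | .var i, hv, k, _ => by
    have : i < n := hv i (by simp [varList])
    exact gen_mono (Nat.zero_le k) (by simp [gen]; omega)
  | .func BinF.f ts, hv, k, hk => by
    rw [func_eq_fapp] at hv ⊢
    have hk' : ht (Tm.func BinF.f ts) = max (ht (ts 0)) (ht (ts 1)) + 1 := rfl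
    obtain ⟨k', rfl⟩ : ∃ k', k = k' + 1 := ⟨k - 1, by omega⟩
    have hv0 : VarsLt n (ts 0) := fun v hvv => hv v (by rw [varList_fapp]; simp [hvv])
    have hv1 : VarsLt n (ts 1) := fun v hvv => hv v (by rw [varList_fapp]; simp [hvv])
    have h0 : ts 0 ∈ gen n k' := mem_gen hv0 (by omega)
    have h1 : ts 1 ∈ gen n k' := mem_gen hv1 (by omega)
    rw [gen]
    refine List.mem_append.2 (Or.inr ?_)
    rw [List.mem_flatMap]
    exact ⟨ts 0, h0, List.mem_map.2 ⟨ts 1, h1, rfl⟩⟩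

lemma ht_lt_length : ∀ t : Tm BinF, ht t < t.varList.length
  | .var i => by simp [ht, varList]
  | .func BinF.f ts => by
    have h0 := ht_lt_length (ts 0)
    have h1 := ht_lt_length (ts 1)
    have n0 := varList_ne_nil (ts 0)
    have n1 := varList_ne_nil (ts 1)
    rw [func_eq_fapp, varList_fapp, List.length_append]
    have l0 : 1 ≤ (ts 0).varList.length := List.length_pos_iff.2 n0
    have l1 : 1 ≤ (ts 1).varList.length := List.length_pos_iff.2 n1
    have : ht (Tm.func BinF.f ts) = max (ht (ts 0)) (ht (ts 1)) + 1 := rfl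
    rw [func_eq_fapp] at this
    rw [this]
    omega

lemma length_le_of_orderly {t : Tm BinF} (h : t.Orderly) {n : ℕ} (hv : VarsLt n t) :
    t.varList.length ≤ n := by
  simp only [Orderly, List.Chain'] at h; rw [List.isChain_iff_pairwise] at h
  have hnd : t.varList.Nodup := h.imp Nat.ne_of_lt
  have hsub : t.varList.toFinset ⊆ Finset.range n := by
    intro v hvv
    rw [List.mem_toFinset] at hvv
    exact Finset.mem_range.2 (hv v hvv)
  have := Finset.card_le_card hsub
  rwa [List.toFinset_card_of_nodup hnd, Finset.card_range] at this

/-- Enumeration of all orderly terms with variables `< n`. -/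
def allR (n : ℕ) : List (Tm BinF) := gen n n

lemma mem_allR {t : Tm BinF} (h : t.Orderly) {n : ℕ} (hv : VarsLt n t) : t ∈ allR n := by
  have h1 := ht_lt_length t
  have h2 := length_le_of_orderly h hv
  exact mem_gen hv (by omega)

end Tm

end Infra5
section StepStage

open Tm

variable {β : Type w}

lemma varsGe_fv {N : ℕ} {t : Tm BinF} (h : VarsGe N t) : N ≤ t.fv :=
  h _ (fv_mem_varList t)

lemma step_lemma (𝒜 : Tm BinF → β) (hR : RamseyOA 𝒜)
    (g : ℕ → Tm BinF) (hg : StrongAdm g) (N : ℕ) (Y : Set β) :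
    ∃ σ : ℕ → Tm BinF, (∀ i, i < N → σ i = Tm.var i) ∧ (∀ i, N ≤ i → VarsGe N (σ i)) ∧
      StrongAdm σ ∧
      ((∀ u, u.Orderly → VarsGe N u → 𝒜 ((u.subst σ).subst g) ∈ Y) ∨
       (∀ u, u.Orderly → VarsGe N u → 𝒜 ((u.subst σ).subst g) ∉ Y)) := by
  classical
  set sh : ℕ → Tm BinF := fun i => Tm.var (N + i) with hsh
  set B : Tm BinF → β := fun t => 𝒜 ((t.subst sh).subst g) with hB
  have hBred : OAReduction B 𝒜 := by
    refine ⟨fun i => g (N + i), (hg.tail N).admissible, fun s _ => ?_⟩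
    show 𝒜 ((s.subst sh).subst g) = _
    rw [subst_subst]
    rfl
  obtain ⟨C, ⟨ρ, hρadm, hC⟩, hhom⟩ := hR B hBred (Y ∩ OAUniv 𝒜) Set.inter_subset_right
  have hρ := hρadm.strongAdm
  set σ : ℕ → Tm BinF := fun i => if i < N then Tm.var i else (ρ (i - N)).subst sh with hσ
  have hshAdm : StrongAdm sh := strongAdm_shift N
  have hge : ∀ i, N ≤ i → VarsGe N (σ i) := by
    intro i hi
    simp only [hσ, if_neg (by omega : ¬ i < N)]
    exact varsGe_subst (fun j _ => varsGe_var (by omega))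
  have hadm : StrongAdm σ := by
    constructor
    · intro i
      simp only [hσ]
      split
      · exact orderly_var i
      · exact hshAdm.orderly_subst (hρ.1 _)
    · intro i j hij
      rcases lt_or_ge j N with hj | hj
      · simp only [hσ, if_pos (by omega : i < N), if_pos hj]
        exact termLT_iff.2 (by simpa [lv_var, fv_var])
      rcases lt_or_ge i N with hi | hi
      · have hfv := varsGe_fv (hge j hj)
        have hidi : σ i = Tm.var i := by simp [hσ, if_pos hi]
        rw [hidi, termLT_iff, lv_var]
        omega
      · simp only [hσ, if_neg (by omega : ¬ i < N), if_neg (by omega : ¬ j < N)]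
        exact hshAdm.termLT_subst (hρ.2 (i - N) (j - N) (by omega))
  -- key computation
  have key : ∀ u : Tm BinF, u.Orderly → VarsGe N u →
      ∃ u' : Tm BinF, u'.Orderly ∧ 𝒜 ((u.subst σ).subst g) = C u' := by
    intro u hu hge'
    set down : ℕ → Tm BinF := fun i => Tm.var (i - N) with hdown
    have hu' : (u.subst down).Orderly := by
      refine orderly_subst' hu (fun i _ => orderly_var _) (fun i j hi hj hij => ?_)
      have := hge' i hi; have := hge' j hj
      exact termLT_iff.2 (by simp only [hdown, lv_var, fv_var]; omega)
    refine ⟨u.subst down, hu', ?_⟩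
    have e1 : u.subst σ = ((u.subst down).subst ρ).subst sh := by
      rw [subst_subst, subst_subst]
      refine subst_congr (fun i hi => ?_)
      have := hge' i hi
      simp only [hσ, hdown, if_neg (by omega : ¬ i < N)]
      rfl
    rw [e1, hC _ hu']
  have memA : ∀ u' : Tm BinF, u'.Orderly → C u' ∈ OAUniv 𝒜 := by
    intro u' hu'
    rw [hC _ hu']
    have hord : (((u'.subst ρ).subst sh).subst g).Orderly :=
      hg.orderly_subst (hshAdm.orderly_subst (hρ.orderly_subst hu'))
    exact ⟨_, hord, rfl⟩
  refine ⟨σ, fun i hi => by simp [hσ, if_pos hi], hge, hadm, ?_⟩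
  rcases hhom with hsub | hdis
  · left
    intro u hu hge'
    obtain ⟨u', hu', he⟩ := key u hu hge'
    rw [he]
    exact (hsub ⟨u', hu', rfl⟩).1
  · right
    intro u hu hge' hmem
    obtain ⟨u', hu', he⟩ := key u hu hge'
    rw [he] at hmem
    have : C u' ∈ OAUniv C ∩ (Y ∩ OAUniv 𝒜) := ⟨⟨u', hu', rfl⟩, hmem, memA u' hu'⟩
    rw [hdis] at this
    exact this

lemma stage_lemma (𝒜 : Tm BinF → β) (hR : RamseyOA 𝒜) (X : Set (β × β))
    (m : ℕ) (rs : List (Tm BinF)) :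
    ∀ (g : ℕ → Tm BinF), StrongAdm g →
    ∃ σ : ℕ → Tm BinF, (∀ i, i < m → σ i = Tm.var i) ∧ (∀ i, m ≤ i → VarsGe m (σ i)) ∧
      StrongAdm σ ∧
      ∀ r ∈ rs, VarsLt m r →
        (∀ u, u.Orderly → VarsGe m u → (𝒜 (r.subst g), 𝒜 ((u.subst σ).subst g)) ∈ X) ∨
        (∀ u, u.Orderly → VarsGe m u → (𝒜 (r.subst g), 𝒜 ((u.subst σ).subst g)) ∉ X) := by
  induction rs with
  | nil =>
    intro g hg
    exact ⟨fun i => Tm.var i, fun i _ => rfl, fun i hi => varsGe_var hi, strongAdm_var,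
      by simp⟩
  | cons r rs ih =>
    intro g hg
    obtain ⟨σ₁, hid1, hge1, hadm1, hstep⟩ :=
      step_lemma 𝒜 hR g hg m {y | (𝒜 (r.subst g), y) ∈ X}
    obtain ⟨σ₂, hid2, hge2, hadm2, hrec⟩ := ih (fun i => (σ₁ i).subst g) (hadm1.comp hg)
    refine ⟨fun i => (σ₂ i).subst σ₁, ?_, ?_, hadm2.comp hadm1, ?_⟩
    · intro i hi
      show (σ₂ i).subst σ₁ = _
      rw [hid2 i hi, subst_var, hid1 i hi]
    · intro i hi
      exact varsGe_subst (fun j hj => hge1 j (hge2 i hi j hj))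
    · intro r' hr' hvlt
      have subeq : ∀ u : Tm BinF,
          ((u.subst fun i => (σ₂ i).subst σ₁).subst g) = ((u.subst σ₂).subst σ₁).subst g := by
        intro u; rw [subst_subst σ₂ σ₁ u]
      rcases List.mem_cons.1 hr' with rfl | hr'
      · rcases hstep with hs | hs
        · left
          intro u hu hgeu
          rw [subeq]
          exact hs (u.subst σ₂) (hadm2.orderly_subst hu)
            (varsGe_subst (fun j hj => hge2 j (hgeu j hj)))
        · right
          intro u hu hgeu
          rw [subeq]
          exact hs (u.subst σ₂) (hadm2.orderly_subst hu)
            (varsGe_subst (fun j hj => hge2 j (hgeu j hj)))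
      · have hval : r'.subst (fun i => (σ₁ i).subst g) = r'.subst g := by
          rw [← subst_subst]
          congr 1
          rw [subst_congr (fun i hi => hid1 i (hvlt i hi)), subst_id]
        have hval2 : ∀ u : Tm BinF,
            (u.subst σ₂).subst (fun i => (σ₁ i).subst g) =
              ((u.subst fun i => (σ₂ i).subst σ₁).subst g) := by
          intro u
          rw [← subst_subst σ₂ σ₁ u, ← subst_subst σ₁ g]
        rcases hrec r' hr' hvlt with hs | hs
        · left
          intro u hu hgeu
          have := hs u hu hgeu
          rwa [hval, hval2] at this
        · right
          intro u hu hgeu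
          have := hs u hu hgeu
          rwa [hval, hval2] at this

end StepStage
section Fusion

open Tm

variable {β : Type w}

/-- The fusion sequence of reductions. -/
noncomputable def fusionSeq (𝒜 : Tm BinF → β) (hR : RamseyOA 𝒜) (X : Set (β × β))
    (d : ℕ → Tm BinF) (hd : StrongAdm d) : ℕ → {g : ℕ → Tm BinF // StrongAdm g}
  | 0 => ⟨d, hd⟩
  | m + 1 =>
    ⟨fun i => ((stage_lemma 𝒜 hR X m (allR m) (fusionSeq 𝒜 hR X d hd m).1
        (fusionSeq 𝒜 hR X d hd m).2).choose i).subst (fusionSeq 𝒜 hR X d hd m).1,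
      ((stage_lemma 𝒜 hR X m (allR m) (fusionSeq 𝒜 hR X d hd m).1
        (fusionSeq 𝒜 hR X d hd m).2).choose_spec.2.2.1).comp (fusionSeq 𝒜 hR X d hd m).2⟩

variable (𝒜 : Tm BinF → β) (hR : RamseyOA 𝒜) (X : Set (β × β))
    (d : ℕ → Tm BinF) (hd : StrongAdm d)

/-- The substitution chosen at stage `m`. -/
noncomputable def stageσ (m : ℕ) : ℕ → Tm BinF :=
  (stage_lemma 𝒜 hR X m (allR m) (fusionSeq 𝒜 hR X d hd m).1
    (fusionSeq 𝒜 hR X d hd m).2).choose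

lemma stageσ_spec (m : ℕ) :
    (∀ i, i < m → stageσ 𝒜 hR X d hd m i = Tm.var i) ∧
    (∀ i, m ≤ i → VarsGe m (stageσ 𝒜 hR X d hd m i)) ∧
    StrongAdm (stageσ 𝒜 hR X d hd m) ∧
    ∀ r ∈ allR m, VarsLt m r →
      (∀ u, u.Orderly → VarsGe m u →
        (𝒜 (r.subst (fusionSeq 𝒜 hR X d hd m).1),
         𝒜 ((u.subst (stageσ 𝒜 hR X d hd m)).subst (fusionSeq 𝒜 hR X d hd m).1)) ∈ X) ∨
      (∀ u, u.Orderly → VarsGe m u →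
        (𝒜 (r.subst (fusionSeq 𝒜 hR X d hd m).1),
         𝒜 ((u.subst (stageσ 𝒜 hR X d hd m)).subst (fusionSeq 𝒜 hR X d hd m).1)) ∉ X) :=
  (stage_lemma 𝒜 hR X m (allR m) (fusionSeq 𝒜 hR X d hd m).1
    (fusionSeq 𝒜 hR X d hd m).2).choose_spec

lemma fusionSeq_succ (m : ℕ) :
    (fusionSeq 𝒜 hR X d hd (m + 1)).1 =
      fun i => (stageσ 𝒜 hR X d hd m i).subst (fusionSeq 𝒜 hR X d hd m).1 := rfl

/-- The limit (diagonal) sequence. -/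
noncomputable def limSeq : ℕ → Tm BinF := fun i => (fusionSeq 𝒜 hR X d hd (i + 1)).1 i

/-- Composition of the stage substitutions from `M` to `M + k`. -/
noncomputable def Tseq (M : ℕ) : ℕ → ℕ → Tm BinF
  | 0 => fun i => Tm.var i
  | k + 1 => fun i => (stageσ 𝒜 hR X d hd (M + k) i).subst (Tseq M k)

lemma Tseq_strongAdm (M k : ℕ) : StrongAdm (Tseq 𝒜 hR X d hd M k) := by
  induction k with
  | zero => exact strongAdm_var
  | succ k ih => exact ((stageσ_spec 𝒜 hR X d hd (M + k)).2.2.1).comp ih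

lemma fusionSeq_eq_Tseq (M k : ℕ) :
    (fusionSeq 𝒜 hR X d hd (M + k)).1 =
      fun i => (Tseq 𝒜 hR X d hd M k i).subst (fusionSeq 𝒜 hR X d hd M).1 := by
  induction k with
  | zero => funext i; show _ = (Tm.var i).subst _; rw [subst_var]; rfl
  | succ k ih =>
    show (fusionSeq 𝒜 hR X d hd ((M + k) + 1)).1 = _
    rw [fusionSeq_succ, ih]
    funext i
    show (stageσ 𝒜 hR X d hd (M + k) i).subst
        (fun j => (Tseq 𝒜 hR X d hd M k j).subst (fusionSeq 𝒜 hR X d hd M).1) =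
      ((stageσ 𝒜 hR X d hd (M + k) i).subst (Tseq 𝒜 hR X d hd M k)).subst
        (fusionSeq 𝒜 hR X d hd M).1
    rw [subst_subst]

lemma Tseq_stab (M k₀ : ℕ) : ∀ k, k₀ ≤ k → ∀ i, i < M + k₀ →
    Tseq 𝒜 hR X d hd M k i = Tseq 𝒜 hR X d hd M k₀ i := by
  intro k hk
  obtain ⟨a, rfl⟩ : ∃ a, k = k₀ + a := ⟨k - k₀, by omega⟩
  induction a with
  | zero => intro i _; rfl
  | succ a ih =>
    intro i hi
    show (stageσ 𝒜 hR X d hd (M + (k₀ + a)) i).subst _ = _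
    rw [(stageσ_spec 𝒜 hR X d hd (M + (k₀ + a))).1 i (by omega), subst_var]
    exact ih (by omega) i hi

lemma Tseq_varsGe (M : ℕ) : ∀ k i, M ≤ i → VarsGe M (Tseq 𝒜 hR X d hd M k i) := by
  intro k
  induction k with
  | zero => exact fun i hi => varsGe_var hi
  | succ k ih =>
    intro i hi
    show VarsGe M ((stageσ 𝒜 hR X d hd (M + k) i).subst (Tseq 𝒜 hR X d hd M k))
    rcases lt_or_ge i (M + k) with h | h
    · rw [(stageσ_spec 𝒜 hR X d hd (M + k)).1 i h, subst_var]
      exact ih i hi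
    · refine varsGe_subst (fun j hj => ?_)
      have hj' := (stageσ_spec 𝒜 hR X d hd (M + k)).2.1 i h j hj
      exact ih j (by omega)

lemma fusionSeq_stab : ∀ m m', m ≤ m' → ∀ i, i < m →
    (fusionSeq 𝒜 hR X d hd m').1 i = (fusionSeq 𝒜 hR X d hd m).1 i := by
  intro m m' hm
  obtain ⟨a, rfl⟩ : ∃ a, m' = m + a := ⟨m' - m, by omega⟩
  induction a with
  | zero => intro i _; rfl
  | succ a ih =>
    intro i hi
    show (fusionSeq 𝒜 hR X d hd ((m + a) + 1)).1 i = _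
    rw [fusionSeq_succ]
    show (stageσ 𝒜 hR X d hd (m + a) i).subst _ = _
    rw [(stageσ_spec 𝒜 hR X d hd (m + a)).1 i (by omega), subst_var]
    exact ih (by omega) i hi

lemma limSeq_eq (m i : ℕ) (hi : i < m) :
    limSeq 𝒜 hR X d hd i = (fusionSeq 𝒜 hR X d hd m).1 i := by
  show (fusionSeq 𝒜 hR X d hd (i + 1)).1 i = _
  rcases le_or_gt m (i + 1) with h | h
  · rw [fusionSeq_stab 𝒜 hR X d hd m (i + 1) h i hi]
  · rw [fusionSeq_stab 𝒜 hR X d hd (i + 1) m (by omega) i (by omega)]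

/-- The diagonal substitution expressing `limSeq` over stage `M`. -/
noncomputable def ρseq (M : ℕ) : ℕ → Tm BinF := fun i => Tseq 𝒜 hR X d hd M (i + 1 - M) i

lemma limSeq_factor (M i : ℕ) (h : M ≤ i + 1) :
    limSeq 𝒜 hR X d hd i = (ρseq 𝒜 hR X d hd M i).subst (fusionSeq 𝒜 hR X d hd M).1 := by
  show (fusionSeq 𝒜 hR X d hd (i + 1)).1 i = _
  have : i + 1 = M + (i + 1 - M) := by omega
  rw [this, fusionSeq_eq_Tseq]
  rfl

lemma ρseq_orderly (M i : ℕ) : (ρseq 𝒜 hR X d hd M i).Orderly :=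
  (Tseq_strongAdm 𝒜 hR X d hd M (i + 1 - M)).1 i

lemma ρseq_termLT (M i j : ℕ) (hM : M ≤ i + 1) (hij : i < j) :
    TermLT (ρseq 𝒜 hR X d hd M i) (ρseq 𝒜 hR X d hd M j) := by
  have e1 : ρseq 𝒜 hR X d hd M i = Tseq 𝒜 hR X d hd M (j + 1 - M) i := by
    show Tseq 𝒜 hR X d hd M (i + 1 - M) i = _
    rw [Tseq_stab 𝒜 hR X d hd M (i + 1 - M) (j + 1 - M) (by omega) i (by omega)]
  rw [e1]
  exact (Tseq_strongAdm 𝒜 hR X d hd M (j + 1 - M)).2 i j hij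

lemma ρseq_varsGe' (n i : ℕ) (h : n ≤ i) : VarsGe n (ρseq 𝒜 hR X d hd (n + 1) i) := by
  rcases eq_or_lt_of_le h with rfl | h'
  · show VarsGe n (Tseq 𝒜 hR X d hd (n + 1) (n + 1 - (n + 1)) n)
    rw [Nat.sub_self]
    exact varsGe_var le_rfl
  · intro v hv
    exact le_of_lt (by
      have := Tseq_varsGe 𝒜 hR X d hd (n + 1) (i + 1 - (n + 1)) i h' v hv
      omega)

/-- Factorization of substitution by `limSeq` through stage `n+1`, for terms
with variables `≥ n`. -/
lemma limSeq_subst_factor (n : ℕ) (u : Tm BinF) (hu : u.Orderly) (hge : VarsGe n u) :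
    (u.subst (ρseq 𝒜 hR X d hd (n + 1))).Orderly ∧
    VarsGe n (u.subst (ρseq 𝒜 hR X d hd (n + 1))) ∧
    u.subst (limSeq 𝒜 hR X d hd) =
      (u.subst (ρseq 𝒜 hR X d hd (n + 1))).subst (fusionSeq 𝒜 hR X d hd (n + 1)).1 := by
  refine ⟨orderly_subst' hu (fun i _ => ρseq_orderly 𝒜 hR X d hd _ i)
      (fun i j hi _ hij => ρseq_termLT 𝒜 hR X d hd _ i j (by have := hge i hi; omega) hij),
    varsGe_subst (fun j hj => ρseq_varsGe' 𝒜 hR X d hd n j (hge j hj)), ?_⟩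
  rw [subst_subst]
  exact subst_congr (fun i hi =>
    limSeq_factor 𝒜 hR X d hd (n + 1) i (by have := hge i hi; omega))

/-- Factorization through stage `0`. -/
lemma limSeq_subst_factor0 (u : Tm BinF) (hu : u.Orderly) :
    (u.subst (ρseq 𝒜 hR X d hd 0)).Orderly ∧
    u.subst (limSeq 𝒜 hR X d hd) = (u.subst (ρseq 𝒜 hR X d hd 0)).subst d := by
  constructor
  · exact orderly_subst' hu (fun i _ => ρseq_orderly 𝒜 hR X d hd _ i)
      (fun i j _ _ hij => ρseq_termLT 𝒜 hR X d hd 0 i j (by omega) hij)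
  · rw [subst_subst]
    exact subst_congr (fun i _ => limSeq_factor 𝒜 hR X d hd 0 i (by omega))

lemma ρseq0_strongAdm : StrongAdm (ρseq 𝒜 hR X d hd 0) :=
  ⟨fun i => ρseq_orderly 𝒜 hR X d hd 0 i,
   fun i j hij => ρseq_termLT 𝒜 hR X d hd 0 i j (by omega) hij⟩

end Fusion
section PairRamsey

open Tm

variable {β : Type w}

lemma OAReduction.trans' {𝒞 ℬ 𝒜 : Tm BinF → β} (h1 : OAReduction 𝒞 ℬ)
    (h2 : OAReduction ℬ 𝒜) : OAReduction 𝒞 𝒜 := by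
  obtain ⟨s, hsadm, hs⟩ := h1
  obtain ⟨t, htadm, ht⟩ := h2
  refine ⟨fun i => (s i).subst t,
    ((hsadm.strongAdm).comp htadm.strongAdm).admissible, fun u hu => ?_⟩
  rw [hs u hu, ht _ (hsadm.strongAdm.orderly_subst hu), subst_subst]

lemma endHom (𝒜 : Tm BinF → β) (hR : RamseyOA 𝒜) (X : Set (β × β))
    (d : ℕ → Tm BinF) (hd : StrongAdm d) (t₁ : Tm BinF) (h₁ : t₁.Orderly)
    (t₂ t₂' : Tm BinF) (h₂ : t₂.Orderly) (h₂' : t₂'.Orderly)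
    (hlt : TermLT t₁ t₂) (hlt' : TermLT t₁ t₂') :
    ((𝒜 (t₁.subst (limSeq 𝒜 hR X d hd)), 𝒜 (t₂.subst (limSeq 𝒜 hR X d hd))) ∈ X ↔
     (𝒜 (t₁.subst (limSeq 𝒜 hR X d hd)), 𝒜 (t₂'.subst (limSeq 𝒜 hR X d hd))) ∈ X) := by
  set m : ℕ := t₁.lv + 1 with hm
  have hvlt : VarsLt m t₁ := fun v hv => by have := h₁.le_lv hv; omega
  have hmem : t₁ ∈ allR m := mem_allR h₁ hvlt
  have claimA : t₁.subst (limSeq 𝒜 hR X d hd) = t₁.subst (fusionSeq 𝒜 hR X d hd m).1 :=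
    subst_congr (fun i hi => limSeq_eq 𝒜 hR X d hd m i (hvlt i hi))
  have claimB : ∀ s : Tm BinF, s.Orderly → TermLT t₁ s →
      ∃ u : Tm BinF, u.Orderly ∧ VarsGe m u ∧
        s.subst (limSeq 𝒜 hR X d hd) =
          (u.subst (stageσ 𝒜 hR X d hd m)).subst (fusionSeq 𝒜 hR X d hd m).1 := by
    intro s hs hlts
    have hge : VarsGe m s := hs.varsGe_of_termLT hlts
    obtain ⟨hord, hge', heq⟩ := limSeq_subst_factor 𝒜 hR X d hd m s hs hge
    refine ⟨s.subst (ρseq 𝒜 hR X d hd (m + 1)), hord, hge', ?_⟩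
    rw [heq, fusionSeq_succ, ← subst_subst]
  obtain ⟨u₂, hu₂, hge₂, he₂⟩ := claimB t₂ h₂ hlt
  obtain ⟨u₂', hu₂', hge₂', he₂'⟩ := claimB t₂' h₂' hlt'
  rcases (stageσ_spec 𝒜 hR X d hd m).2.2.2 t₁ hmem hvlt with h | h
  · exact iff_of_true (by rw [claimA, he₂]; exact h u₂ hu₂ hge₂)
      (by rw [claimA, he₂']; exact h u₂' hu₂' hge₂')
  · exact iff_of_false (by rw [claimA, he₂]; exact h u₂ hu₂ hge₂)
      (by rw [claimA, he₂']; exact h u₂' hu₂' hge₂')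

lemma pair_ramsey (𝒜 : Tm BinF → β) (hR : RamseyOA 𝒜) (𝒟 : Tm BinF → β)
    (hD : OAReduction 𝒟 𝒜) (X : Set (β × β)) :
    ∃ 𝒞 : Tm BinF → β, OAReduction 𝒞 𝒟 ∧
      ((∀ t₁ t₂ : Tm BinF, t₁.Orderly → t₂.Orderly → TermLT t₁ t₂ → (𝒞 t₁, 𝒞 t₂) ∈ X) ∨
       (∀ t₁ t₂ : Tm BinF, t₁.Orderly → t₂.Orderly → TermLT t₁ t₂ → (𝒞 t₁, 𝒞 t₂) ∉ X)) := by
  classical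
  obtain ⟨d, hdadm, hd⟩ := hD
  have hds := hdadm.strongAdm
  set L := limSeq 𝒜 hR X d hds with hL
  set C1 : Tm BinF → β := fun t => 𝒜 (t.subst L) with hC1
  have hred1D : OAReduction C1 𝒟 := by
    refine ⟨ρseq 𝒜 hR X d hds 0, (ρseq0_strongAdm 𝒜 hR X d hds).admissible, fun s hs => ?_⟩
    obtain ⟨ho, he⟩ := limSeq_subst_factor0 𝒜 hR X d hds s hs
    show 𝒜 (s.subst L) = _
    rw [hL, he, ← hd _ ho]
  have hred1A : OAReduction C1 𝒜 := hred1D.trans' ⟨d, hdadm, hd⟩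
  have memU : ∀ t : Tm BinF, t.Orderly → C1 t ∈ OAUniv 𝒜 := by
    intro t ht
    obtain ⟨s, hsadm, hs⟩ := hred1A
    exact ⟨t.subst s, hsadm.strongAdm.orderly_subst ht, (hs t ht).symm⟩
  set Y : Set β := {y | ∃ t₁ : Tm BinF, t₁.Orderly ∧ C1 t₁ = y ∧
      ∀ t₂ : Tm BinF, t₂.Orderly → TermLT t₁ t₂ → (y, C1 t₂) ∈ X} ∩ OAUniv 𝒜 with hY
  obtain ⟨C2, hred2, hom2⟩ := hR C1 hred1A Y Set.inter_subset_right
  obtain ⟨q, hqadm, hC2⟩ := hred2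
  have hqs := hqadm.strongAdm
  have endH' : ∀ a : Tm BinF, a.Orderly → ∀ b b' : Tm BinF, b.Orderly → b'.Orderly →
      TermLT a b → TermLT a b' → ((C1 a, C1 b) ∈ X ↔ (C1 a, C1 b') ∈ X) :=
    fun a ha b b' hb hb' l l' => endHom 𝒜 hR X d hds a ha b b' hb hb' l l'
  refine ⟨C2, OAReduction.trans' ⟨q, hqadm, hC2⟩ hred1D, ?_⟩
  rcases hom2 with hsub | hdis
  · left
    intro u₁ u₂ hu₁ hu₂ hult
    set t₁ := u₁.subst q with ht₁
    set t₂ := u₂.subst q with ht₂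
    have ho₁ : t₁.Orderly := hqs.orderly_subst hu₁
    have ho₂ : t₂.Orderly := hqs.orderly_subst hu₂
    have hlt12 : TermLT t₁ t₂ := hqs.termLT_subst hult
    have hy : C2 u₁ ∈ Y := hsub ⟨u₁, hu₁, rfl⟩
    obtain ⟨⟨t₁', ht₁', heq, hall⟩, _⟩ := hy
    set v : Tm BinF := Tm.var (max t₁.lv t₁'.lv + 1) with hv
    have hov : v.Orderly := orderly_var _
    have hltv : TermLT t₁ v := termLT_iff.2 (by simp [hv, fv_var])
    have hltv' : TermLT t₁' v := termLT_iff.2 (by simp [hv, fv_var])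
    have h1 := hall v hov hltv'
    have e1 : C2 u₁ = C1 t₁ := hC2 u₁ hu₁
    rw [e1] at h1
    have h2 : (C1 t₁, C1 t₂) ∈ X := (endH' t₁ ho₁ t₂ v ho₂ hov hlt12 hltv).2 h1
    rw [hC2 u₁ hu₁, hC2 u₂ hu₂]
    exact h2
  · right
    intro u₁ u₂ hu₁ hu₂ hult hmem
    set t₁ := u₁.subst q with ht₁
    set t₂ := u₂.subst q with ht₂
    have ho₁ : t₁.Orderly := hqs.orderly_subst hu₁
    have ho₂ : t₂.Orderly := hqs.orderly_subst hu₂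
    have hlt12 : TermLT t₁ t₂ := hqs.termLT_subst hult
    rw [hC2 u₁ hu₁, hC2 u₂ hu₂] at hmem
    have hy : C2 u₁ ∈ Y := by
      rw [hC2 u₁ hu₁]
      refine ⟨⟨t₁, ho₁, rfl, fun t₂' ho₂' hlt' => ?_⟩, memU t₁ ho₁⟩
      exact (endH' t₁ ho₁ t₂' t₂ ho₂' ho₂ hlt' hlt12).2 hmem
    have : C2 u₁ ∈ OAUniv C2 ∩ Y := ⟨⟨u₁, hu₁, rfl⟩, hy⟩
    rw [hdis] at this
    exact this

end PairRamsey
/-- If the orderly algebra `𝒜` is Ramsey, then so is `♯𝒜`. -/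
theorem sharp_ramsey {β : Type w} (𝒜 : Tm BinF → β) (h𝒜 : IsOrderlyAlg 𝒜)
    (hR : RamseyOA 𝒜) : RamseyOA (sharpOA 𝒜) := by
  classical
  intro ℬ hB X hX
  obtain ⟨t, htadm, hBt⟩ := hB
  have hts := htadm.strongAdm
  set w : ℕ → Tm BinF := Tm.interleaveXY t with hw
  have hws : Tm.StrongAdm w := Tm.strongAdm_interleaveXY hts
  set A0 : Tm BinF → β := fun s => 𝒜 (s.subst w) with hA0
  have hB' : ∀ s : Tm BinF, s.Orderly → ℬ s = sharpOA A0 s := by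
    intro s hs
    rw [hBt s hs]
    show (𝒜 (xyPair (s.subst t)).1, 𝒜 (xyPair (s.subst t)).2) = _
    rw [Tm.xyPair_subst]
    rfl
  set A20 : Tm BinF → β := fun s => A0 (s.subst Tm.pSeq) with hA20
  have hred20 : OAReduction A20 𝒜 := by
    refine ⟨fun i => (Tm.pSeq i).subst w, (Tm.strongAdm_pSeq.comp hws).admissible,
      fun s hs => ?_⟩
    show 𝒜 ((s.subst Tm.pSeq).subst w) = _
    rw [Tm.subst_subst]
  obtain ⟨C0, ⟨q, hqadm, hq⟩, Hpair⟩ := pair_ramsey 𝒜 hR A20 hred20 X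
  have hqs := hqadm.strongAdm
  set sSeq : ℕ → Tm BinF := fun i => fapp (q (2 * i)) (q (2 * i + 1)) with hsSeq
  have horder : ∀ i, (sSeq i).Orderly := by
    intro i
    exact Tm.orderly_fapp.2 ⟨hqs.1 _, hqs.1 _,
      Tm.termLT_iff.1 (hqs.2 (2 * i) (2 * i + 1) (by omega))⟩
  have hsadm : Tm.Admissible sSeq := by
    refine ⟨horder, fun i => Tm.termLT_iff.2 ?_⟩
    show (fapp (q (2 * i)) (q (2 * i + 1))).lv < (fapp (q (2 * (i + 1))) (q (2 * (i + 1) + 1))).fv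
    rw [Tm.lv_fapp, Tm.fv_fapp]
    exact Tm.termLT_iff.1 (hqs.2 (2 * i + 1) (2 * (i + 1)) (by omega))
  have hss := hsadm.strongAdm
  have wkey : ∀ j, Tm.interleaveXY sSeq j = (q j).subst Tm.pSeq := by
    intro j
    rcases Nat.even_or_odd j with ⟨i, hi⟩ | ⟨i, hi⟩
    · have h2 : j = 2 * i := by omega
      subst h2
      rw [Tm.interleaveXY_even]
      show (xyPair (fapp (q (2 * i)) (q (2 * i + 1)))).1 = _
      rw [Tm.xyPair_fapp, ← Tm.subst_pSeq]
    · subst hi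
      rw [Tm.interleaveXY_odd]
      show (xyPair (fapp (q (2 * i)) (q (2 * i + 1)))).2 = _
      rw [Tm.xyPair_fapp]
      show fapp (xyPair (q (2 * i + 1))).1 (xyPair (q (2 * i + 1))).2 = _
      rw [← Tm.subst_pSeq]
  have key : ∀ s : Tm BinF, s.Orderly →
      ℬ (s.subst sSeq) = (C0 (xyPair s).1, C0 (xyPair s).2) := by
    intro s hs
    rw [hB' _ (hss.orderly_subst hs)]
    show (A0 (xyPair (s.subst sSeq)).1, A0 (xyPair (s.subst sSeq)).2) = _
    rw [Tm.xyPair_subst]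
    have conv : ∀ v : Tm BinF, v.Orderly → A0 (v.subst (Tm.interleaveXY sSeq)) = C0 v := by
      intro v hv
      have e1 : v.subst (Tm.interleaveXY sSeq) = (v.subst q).subst Tm.pSeq := by
        rw [Tm.subst_subst]
        exact Tm.subst_congr (fun i _ => wkey i)
      rw [e1, hq v hv]
    rw [conv _ hs.xy1, conv _ hs.xy2]
  refine ⟨fun s => ℬ (s.subst sSeq), ⟨sSeq, hsadm, fun s _ => rfl⟩, ?_⟩
  rcases Hpair with Hp | Hp
  · left
    rintro y ⟨s, hs, rfl⟩
    show ℬ (s.subst sSeq) ∈ X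
    rw [key s hs]
    exact Hp _ _ hs.xy1 hs.xy2 hs.xyLT
  · right
    rw [Set.eq_empty_iff_forall_notMem]
    rintro y ⟨⟨s, hs, rfl⟩, hyX⟩
    have : ℬ (s.subst sSeq) ∈ X := hyX
    rw [key s hs] at this
    exact Hp _ _ hs.xy1 hs.xy2 hs.xyLT this
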